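/- Let K be a triangulated category with split idempotents. A homological functor F : K → Ab is representable (i.e., naturally isomorphic to K(S,-) for some object S) if and only if its exact extension F* : (mod K^op)^op → Ab to the abelianization is representable. -/

import Mathlib

open CategoryTheory CategoryTheory.Limits CategoryTheory.Pretriangulated

universe v u

namespace Statement3

variable (K : Type u) [Category.{v} K] [Preadditive K]

/-- A left `K`-module (i.e. a right `Kᵒᵖ`-module) `X : K ⥤ Ab` is finitely presentable
if it admits an exact sequence `K(K₁,-) ⟶ K(K₀,-) ⟶ X ⟶ 0`. -/
def IsFinitelyPresentable (X : K ⥤ AddCommGrpCat.{v}) : Prop :=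
  ∃ (K₁ K₀ : K) (α : preadditiveCoyoneda.obj (Opposite.op K₁) ⟶
      preadditiveCoyoneda.obj (Opposite.op K₀))
    (π : preadditiveCoyoneda.obj (Opposite.op K₀) ⟶ X) (w : α ≫ π = 0),
    Nonempty (IsColimit (CokernelCofork.ofπ π w))

/-- The category `mod Kᵒᵖ` of finitely presentable left `K`-modules; its opposite
`(mod Kᵒᵖ)ᵒᵖ` is the abelianization of a triangulated category `K`. -/
def ModKop : Type (max u (v + 1)) :=
  ObjectProperty.FullSubcategory (IsFinitelyPresentable K)

instance : Category (ModKop K) :=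
  ObjectProperty.FullSubcategory.category _

lemma coyoneda_isFinitelyPresentable (A : K) :
    IsFinitelyPresentable K (preadditiveCoyoneda.obj (Opposite.op A)) :=
  ⟨A, A, 0, 𝟙 _, by simp, ⟨CokernelCofork.IsColimit.ofId _ rfl⟩⟩

/-- The Yoneda embedding `H_K : K ⥤ (mod Kᵒᵖ)ᵒᵖ`, `A ↦ K(A,-)`. -/
def yonedaFP : K ⥤ (ModKop K)ᵒᵖ where
  obj A := Opposite.op ⟨preadditiveCoyoneda.obj (Opposite.op A),
    coyoneda_isFinitelyPresentable K A⟩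
  map f := (show (_ : ModKop K) ⟶ _ from ObjectProperty.homMk (preadditiveCoyoneda.map f.op)).op
  map_id A := by
    apply Quiver.Hom.unop_inj
    apply ObjectProperty.hom_ext
    simp [ModKop, ObjectProperty.homMk]
    rfl
  map_comp f g := by
    apply Quiver.Hom.unop_inj
    apply ObjectProperty.hom_ext
    simp [ModKop, ObjectProperty.homMk]
    rfl

/-! ### Auxiliary definitions and lemmas -/

open Opposite ZeroObject

set_option linter.unusedSectionVars false

section Aux

variable {K}

/-- Notation for the corepresentable functor `K(A,-)`. -/
noncomputable abbrev cy (A : K) : K ⥤ AddCommGrpCat.{v} :=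
  preadditiveCoyoneda.obj (op A)

/-- The contravariant action of `preadditiveCoyoneda` on morphisms. -/
noncomputable abbrev cyMap {A B : K} (f : A ⟶ B) : cy B ⟶ cy A :=
  preadditiveCoyoneda.map f.op

lemma cy_map_apply {A W V : K} (k : W ⟶ V) (g : A ⟶ W) :
    (cy A).map k g = g ≫ k := rfl

lemma cyMap_app {A B W : K} (f : A ⟶ B) (g : B ⟶ W) :
    (cyMap f).app W g = f ≫ g := rfl

/-- The additive Yoneda lemma, easy direction. -/
lemma cy_app_eq {G : K ⥤ AddCommGrpCat.{v}} {A W : K} (τ : cy A ⟶ G)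
    (g : A ⟶ W) : τ.app W g = G.map g (τ.app A (𝟙 A)) := by
  have h : ∀ x, (((cy A).map g) ≫ τ.app W) x
      = (τ.app A ≫ G.map g) x := fun x => by rw [τ.naturality g]
  have h3 := h (𝟙 A)
  erw [comp_apply, comp_apply] at h3
  have : (cy A).map g (𝟙 A) = g := by
    change 𝟙 A ≫ g = g
    simp
  rwa [this] at h3

/-- The additive Yoneda lemma, inverse construction. -/
noncomputable def yInv (G : K ⥤ AddCommGrpCat.{v}) [G.Additive] {A : K} (x : G.obj A) :
    cy A ⟶ G where
  app W := AddCommGrpCat.ofHom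
    { toFun := fun g => G.map g x
      map_zero' := by show G.map (0 : A ⟶ W) x = 0; simp
      map_add' := fun (g h : A ⟶ W) => by
        show G.map (g + h) x = G.map g x + G.map h x
        rw [G.map_add]
        simp }
  naturality W V k := by
    ext (g : A ⟶ W)
    change G.map (g ≫ k) x = G.map k (G.map g x)
    simp

@[simp] lemma yInv_app (G : K ⥤ AddCommGrpCat.{v}) [G.Additive] {A : K} (x : G.obj A) (W : K)
    (g : A ⟶ W) : (yInv G x).app W g = G.map g x := rfl

lemma yInv_id (G : K ⥤ AddCommGrpCat.{v}) [G.Additive] {A : K} (x : G.obj A) :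
    (yInv G x).app A (𝟙 A) = x := by
  rw [yInv_app, CategoryTheory.Functor.map_id]
  rfl

section Pointwise

variable {P Q R : K ⥤ AddCommGrpCat.{v}} (α : P ⟶ Q) (π : Q ⟶ R)

lemma w_app (w : α ≫ π = 0) (W : K) : α.app W ≫ π.app W = 0 := by
  rw [← NatTrans.comp_app, w]
  rfl

/-- A pointwise cokernel is a cokernel in the functor category. -/
noncomputable def pointwiseIsColimit (w : α ≫ π = 0)
    (hsurj : ∀ W, Function.Surjective (π.app W))
    (hker : ∀ (W : K) (x : Q.obj W), π.app W x = 0 → ∃ m, α.app W m = x) :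
    IsColimit (CokernelCofork.ofπ π w) := by
  apply evaluationJointlyReflectsColimits
  intro W
  have hS : (ShortComplex.mk (α.app W) (π.app W) (w_app α π w W)).Exact :=
    (ShortComplex.ab_exact_iff _).2 (fun x hx => hker W x hx)
  haveI : Epi (π.app W) := (AddCommGrpCat.epi_iff_surjective _).2 (hsurj W)
  haveI : Epi (ShortComplex.mk (α.app W) (π.app W) (w_app α π w W)).g := by
    assumption
  exact (isColimitMapCoconeCoforkEquiv' ((evaluation K AddCommGrpCat.{v}).obj W) w).symm
    hS.gIsCokernel

lemma surjective_of_isColimit (w : α ≫ π = 0) (h : IsColimit (CokernelCofork.ofπ π w)) (W : K) :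
    Function.Surjective (π.app W) := by
  have hco := isColimitCoforkMapOfIsColimit' ((evaluation K AddCommGrpCat.{v}).obj W) w h
  have : Epi (π.app W) := epi_of_isColimit_cofork hco
  exact (AddCommGrpCat.epi_iff_surjective _).1 this

lemma exact_of_isColimit (w : α ≫ π = 0) (h : IsColimit (CokernelCofork.ofπ π w)) (W : K)
    (x : Q.obj W) (hx : π.app W x = 0) : ∃ m, α.app W m = x := by
  have hco := isColimitCoforkMapOfIsColimit' ((evaluation K AddCommGrpCat.{v}).obj W) w h
  have hS : (ShortComplex.mk (α.app W) (π.app W) (w_app α π w W)).Exact :=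
    ShortComplex.exact_of_g_is_cokernel _ hco
  exact (ShortComplex.ab_exact_iff _).1 hS x hx

end Pointwise

section ModKopCat

/-- The canonical objects of `ModKop K`. -/
noncomputable def mkMod (A : K) : ModKop K :=
  ⟨cy A, coyoneda_isFinitelyPresentable K A⟩

lemma yonedaFP_obj (A : K) : (yonedaFP K).obj A = op (mkMod A) := rfl

/-- Morphisms in `ModKop K` are just natural transformations. -/
def homMk {P Q : ModKop K} (τ : P.obj ⟶ Q.obj) : P ⟶ Q := ObjectProperty.homMk τ

def homUn {P Q : ModKop K} (τ : P ⟶ Q) : P.obj ⟶ Q.obj := τ.hom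

@[simp] lemma homUn_comp {P Q R : ModKop K} (f : P ⟶ Q) (g : Q ⟶ R) :
    homUn (f ≫ g) = homUn f ≫ homUn g := rfl

@[simp] lemma homUn_homMk {P Q : ModKop K} (τ : P.obj ⟶ Q.obj) : homUn (homMk τ) = τ := rfl

lemma homMk_homUn {P Q : ModKop K} (τ : P ⟶ Q) : homMk (homUn τ) = τ := rfl

lemma yonedaFP_map {A B : K} (f : A ⟶ B) :
    (yonedaFP K).map f = (homMk (P := mkMod B) (Q := mkMod A) (cyMap f)).op := rfl

instance : Preadditive (ModKop K) :=
  inferInstanceAs (Preadditive (ObjectProperty.FullSubcategory (IsFinitelyPresentable K)))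

lemma homUn_zero {P Q : ModKop K} : homUn (0 : P ⟶ Q) = 0 := rfl

variable [HasZeroObject K]

lemma isZero_cy_zero : IsZero (cy (0 : K)) := by
  apply Functor.isZero
  intro W
  haveI : Subsingleton ((cy (0 : K)).obj W) :=
    ⟨fun f g => (isZero_zero K).eq_of_src f g⟩
  exact AddCommGrpCat.isZero_of_subsingleton _

lemma isZero_mkMod_zero : IsZero (mkMod (0 : K)) where
  unique_to P := by
    obtain ⟨u⟩ := (isZero_cy_zero (K := K)).unique_to P.obj
    exact ⟨⟨⟨homMk u.toInhabited.default⟩, fun f => ObjectProperty.hom_ext _ (u.uniq f.hom)⟩⟩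
  unique_from P := by
    obtain ⟨u⟩ := (isZero_cy_zero (K := K)).unique_from P.obj
    exact ⟨⟨⟨homMk u.toInhabited.default⟩, fun f => ObjectProperty.hom_ext _ (u.uniq f.hom)⟩⟩

instance : HasZeroObject (ModKop K) :=
  ⟨mkMod 0, isZero_mkMod_zero⟩

end ModKopCat

section LemmaA

variable [HasZeroObject K] [HasShift K ℤ] [∀ n : ℤ, (shiftFunctor K n).Additive]
  [Pretriangulated K] [IsIdempotentComplete K]

/-- Neeman's lemma: a finitely presented homological functor on an idempotent complete
triangulated category is representable. -/
lemma representable_of_cokernel (F : K ⥤ AddCommGrpCat.{v}) [F.IsHomological]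
    {K₀ K₁ : K} (f : K₀ ⟶ K₁) (π : cy K₀ ⟶ F) (w : cyMap f ≫ π = 0)
    (hc : IsColimit (CokernelCofork.ofπ π w)) :
    ∃ S : K, Nonempty (F ≅ preadditiveCoyoneda.obj (op S)) := by
  haveI : F.Additive := inferInstance
  obtain ⟨D, u, h, hT⟩ := distinguished_cocone_triangle₁ f
  set p : F.obj K₀ := π.app K₀ (𝟙 K₀) with hp
  -- `F.map f p = 0`
  have hfp : F.map f p = 0 := by
    have h0 : (cyMap f ≫ π).app K₁ (𝟙 K₁) = 0 := by rw [w]; rfl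
    erw [NatTrans.comp_app, comp_apply] at h0
    have h1 : (cyMap f).app K₁ (𝟙 K₁) = f := by
      change f ≫ 𝟙 K₁ = f
      simp
    rw [h1, cy_app_eq π f] at h0
    exact h0
  -- use homological exactness to lift `p` to `F.obj D`
  have hex := F.map_distinguished_exact _ hT
  rw [ShortComplex.ab_exact_iff] at hex
  obtain ⟨q, hq0⟩ := hex p hfp
  have hq : F.map u q = p := hq0
  set ρ : cy D ⟶ F := yInv F q with hrho
  have hρ : cyMap u ≫ ρ = π := by
    ext W (g : K₀ ⟶ W)
    erw [NatTrans.comp_app, comp_apply]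
    have h2 : (cyMap u).app W g = u ≫ g := rfl
    erw [h2, yInv_app, F.map_comp, comp_apply, hq, cy_app_eq π g]
  -- the comparison `ι : F ⟶ cy D`
  have huf : u ≫ f = 0 := comp_distTriang_mor_zero₁₂ _ hT
  have w2 : cyMap f ≫ cyMap u = 0 := by
    ext W (g : K₁ ⟶ W)
    change u ≫ f ≫ g = (0 : cy K₁ ⟶ cy D).app W g
    rw [← Category.assoc, huf, zero_comp]
    rfl
  obtain ⟨ι, hfac0⟩ := CokernelCofork.IsColimit.desc' hc (cyMap u) w2
  have hfac : π ≫ ι = cyMap u := hfac0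
  have hιρ : ι ≫ ρ = 𝟙 F := by
    apply Cofork.IsColimit.hom_ext hc
    change π ≫ ι ≫ ρ = π ≫ 𝟙 F
    rw [← Category.assoc, hfac, hρ, Category.comp_id]
  set ε : cy D ⟶ cy D := ρ ≫ ι with hεdef
  have hee : ε ≫ ε = ε := by
    rw [hεdef]
    rw [show (ρ ≫ ι) ≫ ρ ≫ ι = ρ ≫ (ι ≫ ρ) ≫ ι by simp, hιρ]
    simp
  set eop : op D ⟶ op D := preadditiveCoyoneda.preimage ε with heopdef
  have hε : preadditiveCoyoneda.map eop = ε := preadditiveCoyoneda.map_preimage ε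
  have heop : eop ≫ eop = eop := preadditiveCoyoneda.map_injective (by
    rw [Functor.map_comp, hε, hee])
  set eD : D ⟶ D := eop.unop with heDdef
  have heD : eD ≫ eD = eD := by
    have := congrArg Quiver.Hom.unop heop
    simpa using this
  obtain ⟨S, i, r, hir, hri⟩ := IsIdempotentComplete.idempotents_split D eD heD
  -- build the isomorphism `F ≅ cy S`
  have hcyir : cyMap i ≫ cyMap r = ε := by
    show preadditiveCoyoneda.map i.op ≫ preadditiveCoyoneda.map r.op = ε
    rw [← preadditiveCoyoneda.map_comp]
    have h2 : i.op ≫ r.op = eop := by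
      rw [← op_comp, hri]
      rfl
    rw [h2, hε]
  have hhi : (ι ≫ cyMap i) ≫ cyMap r ≫ ρ = 𝟙 F := by
    rw [show (ι ≫ cyMap i) ≫ cyMap r ≫ ρ = ι ≫ (cyMap i ≫ cyMap r) ≫ ρ by simp, hcyir,
      hεdef]
    rw [show ι ≫ (ρ ≫ ι) ≫ ρ = (ι ≫ ρ) ≫ ι ≫ ρ by simp, hιρ]
    simp
  have hih : (cyMap r ≫ ρ) ≫ ι ≫ cyMap i = 𝟙 (cy S) := by
    rw [show (cyMap r ≫ ρ) ≫ ι ≫ cyMap i = cyMap r ≫ (ρ ≫ ι) ≫ cyMap i by simp, ← hεdef,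
      ← hε]
    show preadditiveCoyoneda.map r.op ≫ preadditiveCoyoneda.map eop ≫
      preadditiveCoyoneda.map i.op = _
    rw [← preadditiveCoyoneda.map_comp, ← preadditiveCoyoneda.map_comp]
    have h4 : i ≫ eD ≫ r = 𝟙 S := by
      rw [← hri, show i ≫ (r ≫ i) ≫ r = (i ≫ r) ≫ i ≫ r by simp, hir]
      simp [hir]
    have h3 : r.op ≫ eop ≫ i.op = 𝟙 (op S) := by
      apply Quiver.Hom.unop_inj
      simpa using h4
    rw [h3, preadditiveCoyoneda.map_id]
  exact ⟨S, ⟨Iso.mk (ι ≫ cyMap i) (cyMap r ≫ ρ) hhi hih⟩⟩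

end LemmaA

section Main

variable [HasZeroObject K]

/-- Elementwise naturality. -/
lemma nat_app {C : Type*} [Category C] {G H : C ⥤ AddCommGrpCat.{v}} (τ : G ⟶ H) {A B : C}
    (φ : A ⟶ B) (x : G.obj A) : τ.app B (G.map φ x) = H.map φ (τ.app A x) := by
  have h : ∀ y, (G.map φ ≫ τ.app B) y = (τ.app A ≫ H.map φ) y := fun y => by
    rw [τ.naturality φ]
  have := h x
  rwa [comp_apply, comp_apply] at this

lemma app_bijective {C : Type*} [Category C] {G H : C ⥤ AddCommGrpCat.{v}} (τ : G ≅ H) (A : C) :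
    Function.Bijective (τ.hom.app A) :=
  ConcreteCategory.bijective_of_isIso (τ.hom.app A)

lemma app_bijective_inv {C : Type*} [Category C] {G H : C ⥤ AddCommGrpCat.{v}} (τ : G ≅ H)
    (A : C) : Function.Bijective (τ.inv.app A) :=
  ConcreteCategory.bijective_of_isIso (τ.inv.app A)

/-- Transfer a cokernel colimit from the ambient functor category to `ModKop K`. -/
noncomputable def modColimitOfColimit {P Q R : ModKop K} {a : P ⟶ Q} {b : Q ⟶ R}
    {w0 : homUn a ≫ homUn b = 0} (h : IsColimit (CokernelCofork.ofπ (homUn b) w0))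
    (w : a ≫ b = 0) : IsColimit (CokernelCofork.ofπ b w) :=
  CokernelCofork.IsColimit.ofπ b w
    (fun {Z} s hs => homMk ((CokernelCofork.IsColimit.desc' h (homUn s) (congrArg homUn hs)).1))
    (fun {Z} s hs => ObjectProperty.hom_ext _ (CokernelCofork.IsColimit.desc' h (homUn s) (congrArg homUn hs)).2)
    (fun {Z} s hs m hm => by
      have hq : homUn m = (CokernelCofork.IsColimit.desc' h (homUn s) (congrArg homUn hs)).1 := by
        apply Cofork.IsColimit.hom_ext h
        rw [(CokernelCofork.IsColimit.desc' h (homUn s) (congrArg homUn hs)).2]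
        exact congrArg homUn hm
      exact ObjectProperty.hom_ext _ hq)

section Forward

variable (F : K ⥤ AddCommGrpCat.{v}) (Fs : (ModKop K)ᵒᵖ ⥤ AddCommGrpCat.{v})
  [PreservesFiniteLimits Fs] [Fs.PreservesZeroMorphisms]

lemma forward_aux (hFs : yonedaFP K ⋙ Fs ≅ F) (S : K) (σ : F ≅ cy S) :
    ∃ X : (ModKop K)ᵒᵖ, ∃ e : ∀ Y : (ModKop K)ᵒᵖ, (X ⟶ Y) ≃ Fs.obj Y,
      ∀ (Y Z : (ModKop K)ᵒᵖ) (g : Y ⟶ Z) (f : X ⟶ Y),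
        e Z (f ≫ g) = Fs.map g (e Y f) := by
  set X : (ModKop K)ᵒᵖ := (yonedaFP K).obj S with hX
  set ξ : Fs.obj X := hFs.inv.app S (σ.inv.app S (𝟙 S)) with hξ
  set η : ∀ Y : (ModKop K)ᵒᵖ, (X ⟶ Y) → Fs.obj Y := fun Y f => Fs.map f ξ with hη
  -- the canonical Yoneda description of morphisms `X ⟶ yonedaFP B`
  have hΦ : ∀ (B : K) (h : X ⟶ (yonedaFP K).obj B),
      h = (yonedaFP K).map ((homUn h.unop).app B (𝟙 B)) := by
    intro B h
    apply Quiver.Hom.unop_inj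
    apply ObjectProperty.hom_ext
    show (homUn h.unop : cy B ⟶ cy S) = cyMap ((homUn h.unop).app B (𝟙 B))
    ext V (k : B ⟶ V)
    exact cy_app_eq (homUn h.unop) k
  have hΦmap : ∀ (B : K) (φ : S ⟶ B),
      (homUn ((yonedaFP K).map φ).unop).app B (𝟙 B) = φ := by
    intro B φ
    change φ ≫ 𝟙 B = φ
    simp
  -- value of `η` at morphisms of representables
  have hstep2 : ∀ (B : K) (φ : S ⟶ B),
      η ((yonedaFP K).obj B) ((yonedaFP K).map φ) = hFs.inv.app B (σ.inv.app B φ) := by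
    intro B φ
    show Fs.map ((yonedaFP K).map φ) (hFs.inv.app S (σ.inv.app S (𝟙 S))) = _
    rw [show Fs.map ((yonedaFP K).map φ) (hFs.inv.app S (σ.inv.app S (𝟙 S)))
        = hFs.inv.app B (F.map φ (σ.inv.app S (𝟙 S))) from
      (nat_app hFs.inv φ (σ.inv.app S (𝟙 S))).symm]
    congr 1
    have h2 := nat_app σ.inv φ (𝟙 S)
    have h3 : (cy S).map φ (𝟙 S) = φ := by
      change 𝟙 S ≫ φ = φ
      simp
    rw [h3] at h2
    exact h2.symm
  -- bijectivity of `η` at representables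
  have hrep : ∀ B : K, Function.Bijective (η ((yonedaFP K).obj B)) := by
    intro B
    constructor
    · intro h₁ h₂ hh
      erw [hΦ B h₁, hΦ B h₂, hstep2, hstep2] at hh
      have e1 := (app_bijective_inv hFs B).1 hh
      have e2 := (app_bijective_inv σ B).1 e1
      rw [hΦ B h₁, hΦ B h₂, e2]
    · intro z
      obtain ⟨y, hy⟩ := (app_bijective_inv hFs B).2 z
      obtain ⟨φ, hφ⟩ := (app_bijective_inv σ B).2 y
      exact ⟨(yonedaFP K).map φ, by erw [hstep2, hφ, hy]⟩
  -- bijectivity of `η` in general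
  have hbij : ∀ Y : (ModKop K)ᵒᵖ, Function.Bijective (η Y) := by
    intro Y
    obtain ⟨K₁, K₀, α, πG, wG, ⟨hG⟩⟩ := Y.unop.property
    set πM : mkMod K₀ ⟶ Y.unop := homMk πG with hπM
    set αM : mkMod K₁ ⟶ mkMod K₀ := homMk α with hαM
    have wM : αM ≫ πM = 0 := ObjectProperty.hom_ext _ wG
    constructor
    · intro f₁ f₂ hf
      have h1 : η _ (f₁ ≫ πM.op) = η _ (f₂ ≫ πM.op) := by
        show Fs.map (f₁ ≫ πM.op) ξ = Fs.map (f₂ ≫ πM.op) ξ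
        rw [Fs.map_comp, Fs.map_comp, comp_apply, comp_apply]
        show Fs.map πM.op (η Y f₁) = Fs.map πM.op (η Y f₂)
        rw [hf]
      have h2 := (hrep K₀).1 h1
      have h3 : πM ≫ f₁.unop = πM ≫ f₂.unop := by
        have := congrArg Quiver.Hom.unop h2
        simpa using this
      apply Quiver.Hom.unop_inj
      have h4 : homUn f₁.unop = homUn f₂.unop := by
        apply Cofork.IsColimit.hom_ext hG
        exact congrArg homUn h3
      exact ObjectProperty.hom_ext _ h4
    · intro y
      obtain ⟨g, hg⟩ := (hrep K₀).2 (Fs.map πM.op y)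
      have hzero : g ≫ αM.op = 0 := by
        apply (hrep K₁).1
        show Fs.map (g ≫ αM.op) ξ = Fs.map (0 : X ⟶ (yonedaFP K).obj K₁) ξ
        have hc : πM.op ≫ αM.op = (0 : Y ⟶ (yonedaFP K).obj K₁) := by
          rw [← op_comp, wM]
          rfl
        have h1 : Fs.map (g ≫ αM.op) ξ = Fs.map αM.op (Fs.map g ξ) := by
          erw [Fs.map_comp]
          rfl
        have h2 : Fs.map g ξ = Fs.map πM.op y := hg
        erw [h1, h2, ← comp_apply, ← Fs.map_comp, hc, Functor.map_zero, Functor.map_zero]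
        rfl
      have hzero' : homUn αM ≫ homUn g.unop = 0 := by
        have := congrArg Quiver.Hom.unop hzero
        exact congrArg homUn this
      obtain ⟨d, hd⟩ := CokernelCofork.IsColimit.desc' hG (homUn g.unop) hzero'
      set fc : X ⟶ Y := (homMk (P := Y.unop) (Q := mkMod S) d).op with hfc
      have hfac : fc ≫ πM.op = g := by
        erw [hfc, ← op_comp]
        have : πM ≫ homMk (P := Y.unop) (Q := mkMod S) d = g.unop := ObjectProperty.hom_ext _ hd
        rw [this]
        rfl
      -- `Fs.map πM.op` is injective since `Fs` preserves kernels
      have hMcolim : IsColimit (CokernelCofork.ofπ πM wM) :=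
        modColimitOfColimit (a := αM) (b := πM) (w0 := wG) hG wM
      have hMop := CokernelCofork.IsColimit.ofπOp πM wM hMcolim
      have hlim2 := KernelFork.mapIsLimit _ hMop Fs
      haveI : Mono (Fs.map πM.op) := mono_of_isLimit_fork hlim2
      have hinj : Function.Injective (Fs.map πM.op) :=
        (AddCommGrpCat.mono_iff_injective _).1 this
      refine ⟨fc, hinj ?_⟩
      show Fs.map πM.op (Fs.map fc ξ) = Fs.map πM.op y
      have hg' : Fs.map g ξ = Fs.map πM.op y := hg
      rw [← comp_apply, ← Fs.map_comp, hfac]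
      exact hg'
  exact ⟨X, fun Y => Equiv.ofBijective _ (hbij Y), fun Y Z g f => by
    show Fs.map (f ≫ g) ξ = Fs.map g (Fs.map f ξ)
    rw [Fs.map_comp, comp_apply]⟩

end Forward

section Backward

variable [HasShift K ℤ] [∀ n : ℤ, (shiftFunctor K n).Additive]
  [Pretriangulated K] [IsIdempotentComplete K]

lemma backward_aux (F : K ⥤ AddCommGrpCat.{v}) [F.IsHomological]
    (Fs : (ModKop K)ᵒᵖ ⥤ AddCommGrpCat.{v}) [Fs.PreservesZeroMorphisms]
    (hFs : yonedaFP K ⋙ Fs ≅ F)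
    (X : (ModKop K)ᵒᵖ) (e : ∀ Y : (ModKop K)ᵒᵖ, (X ⟶ Y) ≃ Fs.obj Y)
    (he : ∀ (Y Z : (ModKop K)ᵒᵖ) (g : Y ⟶ Z) (f : X ⟶ Y),
      e Z (f ≫ g) = Fs.map g (e Y f)) :
    ∃ S : K, Nonempty (F ≅ preadditiveCoyoneda.obj (op S)) := by
  haveI : F.Additive := inferInstance
  set ξ : Fs.obj X := e X (𝟙 X) with hξ
  have heval : ∀ (Y : (ModKop K)ᵒᵖ) (h : X ⟶ Y), (e Y h : Fs.obj Y) = Fs.map h ξ := by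
    intro Y h
    have := he X Y h (𝟙 X)
    rwa [Category.id_comp] at this
  set B : ∀ A : K, (X ⟶ (yonedaFP K).obj A) → F.obj A := fun A h =>
    hFs.hom.app A (Fs.map h ξ) with hBdef
  have hBbij : ∀ A, Function.Bijective (B A) := by
    intro A
    have hBe : B A = fun h => hFs.hom.app A (e ((yonedaFP K).obj A) h) := by
      funext h
      rw [hBdef, heval]
    rw [hBe]
    exact (app_bijective hFs A).comp (e _).bijective
  have hBnat : ∀ (A A' : K) (h : X ⟶ (yonedaFP K).obj A) (φ : A ⟶ A'),
      B A' (h ≫ (yonedaFP K).map φ) = F.map φ (B A h) := by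
    intro A A' h φ
    show hFs.hom.app A' (Fs.map (h ≫ (yonedaFP K).map φ) ξ) = _
    rw [Fs.map_comp, comp_apply]
    exact nat_app hFs.hom φ (Fs.map h ξ)
  have hB0 : ∀ A : K, B A 0 = 0 := by
    intro A
    show hFs.hom.app A (Fs.map 0 ξ) = 0
    rw [Functor.map_zero]
    simp
  -- presentation of `X`
  obtain ⟨K₁, K₀, α, πG, wG, ⟨hG⟩⟩ := X.unop.property
  set f : K₀ ⟶ K₁ := (preadditiveCoyoneda.preimage α).unop with hfdef
  have hα : cyMap f = α := by
    show preadditiveCoyoneda.map (preadditiveCoyoneda.preimage α).unop.op = α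
    rw [Quiver.Hom.op_unop, preadditiveCoyoneda.map_preimage]
  set πM : mkMod K₀ ⟶ X.unop := homMk πG with hπM
  set p : F.obj K₀ := B K₀ πM.op with hpdef
  set π : cy K₀ ⟶ F := yInv F p with hπdef
  have hπapp : ∀ (W : K) (g : K₀ ⟶ W), π.app W g = B W (πM.op ≫ (yonedaFP K).map g) := by
    intro W g
    erw [hπdef, yInv_app, hBnat]
  -- `cyMap f ≫ π = 0`
  have w : cyMap f ≫ π = 0 := by
    ext W (g : K₁ ⟶ W)
    have h1 : (cyMap f ≫ π).app W g = π.app W (f ≫ g) := rfl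
    rw [h1, hπapp]
    have h2 : πM.op ≫ (yonedaFP K).map (f ≫ g) = 0 := by
      erw [← op_zero (X := mkMod W) (Y := X.unop)]
      erw [show (yonedaFP K).map (f ≫ g)
          = (homMk (P := mkMod W) (Q := mkMod K₀) (cyMap (f ≫ g))).op from rfl, ← op_comp]
      apply congrArg Quiver.Hom.op
      apply ObjectProperty.hom_ext
      show (cyMap (f ≫ g) ≫ πG : cy W ⟶ X.unop.obj) = 0
      have h3 : cyMap (f ≫ g) = cyMap g ≫ cyMap f := by
        show preadditiveCoyoneda.map (f ≫ g).op = _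
        rw [op_comp, preadditiveCoyoneda.map_comp]
      rw [h3, Category.assoc, hα, wG, comp_zero]
    rw [h2, hB0]
    rfl
  -- pointwise surjectivity of `π`
  have hsurj : ∀ W : K, Function.Surjective (π.app W) := by
    intro W x
    obtain ⟨h, hh⟩ := (hBbij W).2 x
    set τ : cy W ⟶ X.unop.obj := homUn h.unop with hτ
    obtain ⟨s, hs⟩ := surjective_of_isColimit α πG wG hG W (τ.app W (𝟙 W))
    have hfact : τ = cyMap s ≫ πG := by
      ext V (k : W ⟶ V)
      rw [show τ.app V k = X.unop.obj.map k (τ.app W (𝟙 W)) from cy_app_eq τ k, ← hs]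
      exact (nat_app πG k s).symm
    have h5 : h = πM.op ≫ (yonedaFP K).map s := by
      apply Quiver.Hom.unop_inj
      erw [show (yonedaFP K).map s
          = (homMk (P := mkMod W) (Q := mkMod K₀) (cyMap s)).op from rfl, ← op_comp]
      erw [Quiver.Hom.unop_op]
      exact ObjectProperty.hom_ext _ hfact
    refine ⟨s, ?_⟩
    erw [hπapp, ← h5, hh]
  -- pointwise exactness of `(cyMap f, π)`
  have hker : ∀ (W : K) (x : (cy K₀).obj W), π.app W x = 0 →
      ∃ m, (cyMap f).app W m = x := by
    intro W g hg
    erw [hπapp] at hg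
    have h6 : πM.op ≫ (yonedaFP K).map g = 0 := by
      apply (hBbij W).1
      rw [hg, hB0]
    have h7 : (cyMap g ≫ πG : cy W ⟶ X.unop.obj) = 0 := by
      have := congrArg Quiver.Hom.unop h6
      erw [show (yonedaFP K).map g
          = (homMk (P := mkMod W) (Q := mkMod K₀) (cyMap g)).op from rfl, ← op_comp] at this
      erw [Quiver.Hom.unop_op] at this
      exact congrArg homUn this
    have h8 : πG.app W g = 0 := by
      have h11 : (cyMap g ≫ πG).app W (𝟙 W) = (0 : cy W ⟶ X.unop.obj).app W (𝟙 W) := by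
        rw [h7]
      have h12 : πG.app W (g ≫ 𝟙 W) = 0 := h11
      erw [Category.comp_id] at h12
      exact h12
    obtain ⟨m, hm⟩ := exact_of_isColimit α πG wG hG W g h8
    exact ⟨m, by rw [hα]; exact hm⟩
  exact representable_of_cokernel F f π w (pointwiseIsColimit (cyMap f) π w hsurj hker)

end Backward

end Main

end Aux

/-- Let `K` be a triangulated category with split idempotents. A homological
functor `F : K ⥤ Ab` is representable (naturally isomorphic to `K(S,-)` for some `S`) if and
only if its exact extension `F* : (mod Kᵒᵖ)ᵒᵖ ⥤ Ab` to the abelianization is representable. -/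
theorem statement3 [HasZeroObject K] [HasShift K ℤ]
    [∀ n : ℤ, (shiftFunctor K n).Additive] [Pretriangulated K] [IsIdempotentComplete K]
    (F : K ⥤ AddCommGrpCat.{v}) [F.IsHomological]
    (Fs : (ModKop K)ᵒᵖ ⥤ AddCommGrpCat.{v})
    [PreservesFiniteLimits Fs] [PreservesFiniteColimits Fs]
    (hFs : yonedaFP K ⋙ Fs ≅ F) :
    (∃ S : K, Nonempty (F ≅ preadditiveCoyoneda.obj (Opposite.op S))) ↔
      (∃ X : (ModKop K)ᵒᵖ, ∃ e : ∀ Y : (ModKop K)ᵒᵖ, (X ⟶ Y) ≃ Fs.obj Y,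
        ∀ (Y Z : (ModKop K)ᵒᵖ) (g : Y ⟶ Z) (f : X ⟶ Y),
          e Z (f ≫ g) = Fs.map g (e Y f)) := by
  haveI : Fs.PreservesZeroMorphisms := inferInstance
  constructor
  · rintro ⟨S, ⟨σ⟩⟩
    exact forward_aux F Fs hFs S σ
  · rintro ⟨X, e, he⟩
    exact backward_aux F Fs hFs X e he

end Statement3
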